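/- Let p be an odd prime, F = GF(p^n), and f = Inv ∘ (0,1). Then the number of x ∈ F with f(x+2) - 2f(x+1) + f(x) = 0 equals 3 if p = 3, equals 1 if p = 5, and equals 0 if p > 5. -/

import Mathlib

theorem stmt_13 {F : Type*} [Field F] [Fintype F] [DecidableEq F] {p n : ℕ}
    (hp : Nat.Prime p) (hodd : Odd p) (hn : 0 < n) (hF : Fintype.card F = p ^ n)
    (f : F → F)
    (hf : f = fun x => if x = 0 then 1 else if x = 1 then 0 else x ^ (p ^ n - 2)) :
    (Finset.univ.filter fun x : F =>
      f (x + 2) - 2 * f (x + 1) + f x = 0).card =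
    if p = 3 then 3 else if p = 5 then 1 else 0 := by
  have hge3 : 3 ≤ p := by
    have h2 := hp.two_le
    have h3 := Nat.odd_iff.mp hodd
    omega
  -- the characteristic of F is p
  have hchar : CharP F p := by
    have hq : CharP F (ringChar F) := ringChar.charP F
    have hqp : (ringChar F).Prime := CharP.char_is_prime F (ringChar F)
    obtain ⟨m, -, hcard⟩ := FiniteField.card F (ringChar F)
    have hpow : p ^ n = ringChar F ^ (m : ℕ) := by rw [← hF, hcard]
    have hd : p ∣ ringChar F ^ (m : ℕ) := hpow ▸ dvd_pow_self p hn.ne'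
    have := (Nat.prime_dvd_prime_iff_eq hp hqp).mp (hp.dvd_of_dvd_pow hd)
    rwa [this]
  have hcast : ∀ m : ℕ, ¬ p ∣ m → ((m : ℕ) : F) ≠ 0 := fun m hm => by
    rwa [Ne, CharP.cast_eq_zero_iff F p m]
  have two0 : (2 : F) ≠ 0 := by
    have := hcast 2 (fun h => by have := Nat.le_of_dvd (by norm_num) h; omega)
    exact_mod_cast this
  have one0 : (1 : F) ≠ 0 := one_ne_zero
  -- inversion lemma
  have hinv : ∀ x : F, x ≠ 0 → x ^ (p ^ n - 2) = x⁻¹ := by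
    intro x hx
    have hc2 : 2 ≤ Fintype.card F := Fintype.one_lt_card
    have h1 : x * x ^ (p ^ n - 2) = 1 := by
      rw [← pow_succ']
      have he : p ^ n - 2 + 1 = Fintype.card F - 1 := by rw [hF]; rw [hF] at hc2; omega
      rw [he]
      exact FiniteField.pow_card_sub_one_eq_one x hx
    exact (inv_eq_of_mul_eq_one_right h1).symm
  subst hf
  -- the generic case yields no solutions
  have generic : ∀ x : F, x ≠ 0 → x + 1 ≠ 0 → x + 2 ≠ 0 →
      (x + 2)⁻¹ - 2 * (x + 1)⁻¹ + x⁻¹ = 0 → False := by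
    intro x h0 h1 h2 heq
    apply two0
    field_simp at heq
    linear_combination heq
  by_cases hthree : p = 3
  · subst hthree
    have c3 : (3 : F) = 0 := by exact_mod_cast CharP.cast_eq_zero F 3
    have h2m1 : (2 : F) = -1 := by linear_combination c3
    have h21 : (2 : F) ≠ 1 := fun h => one0 (by linear_combination h)
    have hset : (Finset.univ.filter fun x : F =>
        (if x + 2 = 0 then 1 else if x + 2 = 1 then 0 else (x + 2) ^ (3 ^ n - 2)) -
          2 * (if x + 1 = 0 then 1 else if x + 1 = 1 then 0 else (x + 1) ^ (3 ^ n - 2)) +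
          (if x = 0 then 1 else if x = 1 then 0 else x ^ (3 ^ n - 2)) = 0) =
        ({0, 1, 2} : Finset F) := by
      ext x
      simp only [Finset.mem_filter, Finset.mem_univ, true_and, Finset.mem_insert,
        Finset.mem_singleton]
      constructor
      · intro hx
        by_contra hcon
        push_neg at hcon
        obtain ⟨hx0, hx1, hx2⟩ := hcon
        have h10 : x + 1 ≠ 0 := fun h => hx2 (by linear_combination h - c3)
        have h11 : x + 1 ≠ 1 := fun h => hx0 (by linear_combination h)
        have h20 : x + 2 ≠ 0 := fun h => hx1 (by linear_combination h - c3)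
        have h21' : x + 2 ≠ 1 := fun h => hx2 (by linear_combination h - c3)
        rw [if_neg h20, if_neg h21', if_neg h10, if_neg h11, if_neg hx0, if_neg hx1,
          hinv _ h20, hinv _ h10, hinv _ hx0] at hx
        exact generic x hx0 h10 h20 hx
      · rintro (rfl | rfl | rfl)
        · rw [show (0 : F) + 2 = 2 from by ring, show (0 : F) + 1 = 1 from by ring,
            if_neg two0, if_neg h21, if_neg one0, if_pos rfl, if_pos rfl, hinv 2 two0, h2m1]
          norm_num
        · rw [show (1 : F) + 2 = 0 from by linear_combination c3,
            show (1 : F) + 1 = 2 from by ring, if_pos rfl,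
            if_neg two0, if_neg h21, if_neg one0, if_pos rfl, hinv 2 two0, h2m1]
          norm_num
        · have h40 : (2 : F) + 2 ≠ 0 := fun h => one0 (by linear_combination h - c3)
          rw [show (2 : F) + 1 = 0 from by linear_combination c3,
            if_neg h40, if_pos (show (2 : F) + 2 = 1 from by linear_combination c3),
            if_pos rfl, if_neg two0, if_neg h21, hinv 2 two0, h2m1]
          norm_num
    rw [hset]
    rw [Finset.card_insert_of_notMem (by
        simp only [Finset.mem_insert, Finset.mem_singleton]
        push_neg
        exact ⟨fun h => one0 h.symm, fun h => two0 h.symm⟩),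
      Finset.card_insert_of_notMem (by
        simp only [Finset.mem_singleton]
        exact fun h => one0 (by linear_combination -h)),
      Finset.card_singleton]
    norm_num
  · have three0 : (3 : F) ≠ 0 := by
      have := hcast 3 (fun h => hthree ((Nat.prime_dvd_prime_iff_eq hp (by norm_num)).mp h))
      exact_mod_cast this
    have h21 : (2 : F) ≠ 1 := fun h => one0 (by linear_combination h)
    have hm10 : (-1 : F) ≠ 0 := by
      intro h; exact one0 (by linear_combination -h)
    have hm11 : (-1 : F) ≠ 1 := fun h => two0 (by linear_combination -h)
    have hm20 : (-2 : F) ≠ 0 := fun h => two0 (by linear_combination -h)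
    have hm21 : (-2 : F) ≠ 1 := fun h => three0 (by linear_combination -h)
    -- characterize membership for p ≠ 3
    have key : ∀ x : F,
        ((if x + 2 = 0 then 1 else if x + 2 = 1 then 0 else (x + 2) ^ (p ^ n - 2)) -
          2 * (if x + 1 = 0 then 1 else if x + 1 = 1 then 0 else (x + 1) ^ (p ^ n - 2)) +
          (if x = 0 then 1 else if x = 1 then 0 else x ^ (p ^ n - 2)) = 0) →
        x = -2 ∧ (5 : F) = 0 := by
      intro x hx
      by_cases hx0 : x = 0
      · subst hx0
        rw [show (0 : F) + 2 = 2 from by ring, show (0 : F) + 1 = 1 from by ring,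
          if_neg two0, if_neg h21, if_neg one0, if_pos rfl, if_pos rfl, hinv 2 two0] at hx
        exact absurd (by field_simp at hx; linear_combination hx) three0
      by_cases hx1 : x = 1
      · subst hx1
        have h30 : (1 : F) + 2 ≠ 0 := by intro h; exact three0 (by linear_combination h)
        have h31 : (1 : F) + 2 ≠ 1 := fun h => two0 (by linear_combination h)
        rw [show (1 : F) + 1 = 2 from by ring, if_neg h30, if_neg h31,
          if_neg two0, if_neg h21, if_neg one0, if_pos rfl, hinv _ h30, hinv 2 two0] at hx
        exact absurd (by field_simp at hx; linear_combination -hx) two0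
      by_cases hxm1 : x = -1
      · subst hxm1
        rw [show (-1 : F) + 2 = 1 from by ring, show (-1 : F) + 1 = 0 from by ring,
          if_neg one0, if_pos rfl, if_pos rfl, if_neg hm10, if_neg hm11, hinv _ hm10] at hx
        exact absurd (by field_simp at hx; linear_combination -hx) three0
      by_cases hxm2 : x = -2
      · subst hxm2
        rw [show (-2 : F) + 2 = 0 from by ring, show (-2 : F) + 1 = -1 from by ring,
          if_pos rfl, if_neg hm10, if_neg hm11, if_neg hm20, if_neg hm21,
          hinv _ hm10, hinv _ hm20] at hx
        refine ⟨rfl, ?_⟩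
        field_simp at hx
        linear_combination hx
      · exfalso
        have h10 : x + 1 ≠ 0 := fun h => hxm1 (by linear_combination h)
        have h11 : x + 1 ≠ 1 := fun h => hx0 (by linear_combination h)
        have h20 : x + 2 ≠ 0 := fun h => hxm2 (by linear_combination h)
        have h21' : x + 2 ≠ 1 := fun h => hxm1 (by linear_combination h)
        rw [if_neg h20, if_neg h21', if_neg h10, if_neg h11, if_neg hx0, if_neg hx1,
          hinv _ h20, hinv _ h10, hinv _ hx0] at hx
        exact generic x hx0 h10 h20 hx
    by_cases hfive : p = 5
    · subst hfive
      have c5 : (5 : F) = 0 := by exact_mod_cast CharP.cast_eq_zero F 5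
      have hset : (Finset.univ.filter fun x : F =>
          (if x + 2 = 0 then 1 else if x + 2 = 1 then 0 else (x + 2) ^ (5 ^ n - 2)) -
            2 * (if x + 1 = 0 then 1 else if x + 1 = 1 then 0 else (x + 1) ^ (5 ^ n - 2)) +
            (if x = 0 then 1 else if x = 1 then 0 else x ^ (5 ^ n - 2)) = 0) =
          ({-2} : Finset F) := by
        ext x
        simp only [Finset.mem_filter, Finset.mem_univ, true_and, Finset.mem_singleton]
        constructor
        · intro hx
          exact (key x hx).1
        · rintro rfl
          rw [show (-2 : F) + 2 = 0 from by ring, show (-2 : F) + 1 = -1 from by ring,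
            if_pos rfl, if_neg hm10, if_neg hm11, if_neg hm20, if_neg hm21,
            hinv _ hm10, hinv _ hm20]
          field_simp
          linear_combination c5
      rw [hset, Finset.card_singleton]
      norm_num
    · simp only [if_neg hthree, if_neg hfive]
      have five0 : (5 : F) ≠ 0 := by
        have := hcast 5 (fun h => hfive ((Nat.prime_dvd_prime_iff_eq hp (by norm_num)).mp h))
        exact_mod_cast this
      rw [Finset.card_eq_zero]
      rw [Finset.filter_eq_empty_iff]
      intro x _
      intro hx
      exact five0 (key x hx).2
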